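/- arXiv:1211.0130 — 2 statements merged into one kernel-verified Lean document; each statement's English description precedes it below -/
import Mathlib

section
/- Fix σ > 0, α < 0, and k a positive integer with k < -α. As ρ → 0+ (with θ = ρ/σ), the k-th moment ∫_0^∞ x^k f(x;α,θ,ρ) dx of the FTG distribution converges to the k-th moment ∫_0^∞ x^k p(x;α,σ) dx of the Pareto distribution, the latter being finite. -/
open MeasureTheory Real Filter Set

noncomputable def uGamma (a r : ℝ) : ℝ := ∫ t in Set.Ioi r, t ^ (a - 1) * Real.exp (-t)

noncomputable def ftg (a θ ρ x : ℝ) : ℝ :=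
  θ * (ρ + θ * x) ^ (a - 1) * Real.exp (-(ρ + θ * x)) / uGamma a ρ

noncomputable def pareto (a σ x : ℝ) : ℝ := -a * σ⁻¹ * (1 + x / σ) ^ (a - 1)

lemma base_integrable (σ α : ℝ) (hσ : 0 < σ) (hα : α < 0) (k : ℕ) (hkα : (k : ℝ) < -α) :
    IntegrableOn (fun x : ℝ => x ^ k * (1 + x / σ) ^ (α - 1)) (Set.Ioi 0) := by
  have hcont : ContinuousOn (fun x : ℝ => x ^ k * (1 + x / σ) ^ (α - 1)) (Ici 0) := by
    intro x hx
    have hc : (0:ℝ) < 1 + x / σ := by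
      have : (0:ℝ) ≤ x / σ := div_nonneg hx hσ.le
      linarith
    exact ((continuous_pow k).continuousAt.mul
      (((continuousAt_const.add (continuousAt_id.div_const σ)).rpow_const
        (Or.inl hc.ne')))).continuousWithinAt
  have h1 : IntegrableOn (fun x : ℝ => x ^ k * (1 + x / σ) ^ (α - 1)) (Ioc 0 1) :=
    ((hcont.mono (fun x hx => hx.1 : Icc (0:ℝ) 1 ⊆ Ici 0)).integrableOn_compact
      isCompact_Icc).mono_set Ioc_subset_Icc_self
  have h2 : IntegrableOn (fun x : ℝ => x ^ k * (1 + x / σ) ^ (α - 1)) (Ioi 1) := by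
    have hb : IntegrableOn (fun x : ℝ => x ^ ((k : ℝ) + α - 1) / σ ^ (α - 1)) (Ioi 1) := by
      exact (integrableOn_Ioi_rpow_of_lt (by linarith) zero_lt_one).div_const _
    have hm : AEStronglyMeasurable (fun x : ℝ => x ^ k * (1 + x / σ) ^ (α - 1)) (volume.restrict (Ioi 1)) :=
      (hcont.mono (fun x (hx : x ∈ Ioi (1:ℝ)) => (le_of_lt (lt_trans zero_lt_one hx) : (0:ℝ) ≤ x))).aestronglyMeasurable measurableSet_Ioi
    apply hb.mono' hm
    rw [ae_restrict_iff' measurableSet_Ioi]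
    filter_upwards with x hx
    have hx1 : (1:ℝ) < x := hx
    have hx0 : (0:ℝ) < x := lt_trans zero_lt_one hx1
    have hc : (0:ℝ) < 1 + x / σ := by positivity
    rw [Real.norm_eq_abs, abs_of_nonneg (by positivity)]
    have step1 : (1 + x / σ) ^ (α - 1) ≤ (x / σ) ^ (α - 1) := by
      apply Real.rpow_le_rpow_of_nonpos (by positivity) (by linarith) (by linarith)
    have step2 : x ^ k * (1 + x / σ) ^ (α - 1) ≤ x ^ k * (x / σ) ^ (α - 1) :=
      mul_le_mul_of_nonneg_left step1 (by positivity)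
    refine step2.trans (le_of_eq ?_)
    rw [Real.div_rpow hx0.le hσ.le, ← Real.rpow_natCast x k, ← mul_div_assoc,
      ← Real.rpow_add hx0, show (k:ℝ) + (α - 1) = (k:ℝ) + α - 1 by ring]
  have := h1.union h2
  rwa [Set.Ioc_union_Ioi_eq_Ioi zero_le_one] at this

lemma I_meas (σ α : ℝ) (hσ : 0 < σ) (k : ℕ) (ρ : ℝ) :
    AEStronglyMeasurable
      (fun x : ℝ => x ^ k * (1 + x / σ) ^ (α - 1) * Real.exp (-(ρ * (1 + x / σ))))
      (volume.restrict (Set.Ioi 0)) := by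
  apply ContinuousOn.aestronglyMeasurable _ measurableSet_Ioi
  intro x hx
  have hx0 : (0:ℝ) < x := hx
  have hc : (0:ℝ) < 1 + x / σ := by positivity
  have c1 : ContinuousAt (fun x : ℝ => 1 + x / σ) x :=
    continuousAt_const.add (continuousAt_id.div_const σ)
  exact (((continuous_pow k).continuousAt.mul (c1.rpow_const (Or.inl hc.ne'))).mul
    (Real.continuous_exp.continuousAt.comp ((c1.const_mul ρ).neg))).continuousWithinAt

lemma I_tendsto (σ α : ℝ) (hσ : 0 < σ) (hα : α < 0) (k : ℕ) (hkα : (k : ℝ) < -α) :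
    Tendsto (fun ρ : ℝ => ∫ x in Set.Ioi (0:ℝ),
        x ^ k * (1 + x / σ) ^ (α - 1) * Real.exp (-(ρ * (1 + x / σ))))
      (nhdsWithin 0 (Set.Ioi 0))
      (nhds (∫ x in Set.Ioi (0:ℝ), x ^ k * (1 + x / σ) ^ (α - 1))) := by
  apply tendsto_integral_filter_of_dominated_convergence
    (bound := fun x : ℝ => x ^ k * (1 + x / σ) ^ (α - 1))
  · filter_upwards with ρ
    exact I_meas σ α hσ k ρ
  · filter_upwards [self_mem_nhdsWithin] with ρ (hρ : ρ ∈ Ioi (0:ℝ))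
    rw [ae_restrict_iff' measurableSet_Ioi]
    filter_upwards with x hx
    have hx0 : (0:ℝ) < x := hx
    have hc : (0:ℝ) < 1 + x / σ := by positivity
    rw [Real.norm_eq_abs, abs_of_nonneg (by positivity)]
    apply mul_le_of_le_one_right (by positivity)
    exact Real.exp_le_one_iff.mpr (neg_nonpos.mpr (mul_nonneg (le_of_lt hρ) hc.le))
  · exact base_integrable σ α hσ hα k hkα
  · filter_upwards with x
    have h0 : Tendsto (fun ρ : ℝ => ρ) (nhdsWithin 0 (Set.Ioi 0)) (nhds 0) :=
      tendsto_id.mono_left nhdsWithin_le_nhds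
    have h := (Real.continuous_exp.tendsto _).comp ((h0.mul_const (1 + x / σ)).neg)
    have h2 := (tendsto_const_nhds (x := x ^ k * (1 + x / σ) ^ (α - 1))).mul h
    simpa using h2

lemma J_tendsto (α : ℝ) (hα : α < 0) :
    Tendsto (fun ρ : ℝ => ∫ s in Set.Ioi (1:ℝ), s ^ (α - 1) * Real.exp (-(ρ * s)))
      (nhdsWithin 0 (Set.Ioi 0)) (nhds (-1 / α)) := by
  have hval : (∫ s in Set.Ioi (1:ℝ), s ^ (α - 1)) = -1 / α := by
    rw [integral_Ioi_rpow_of_lt (by linarith) zero_lt_one]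
    rw [show α - 1 + 1 = α by ring, Real.one_rpow]
  rw [← hval]
  apply tendsto_integral_filter_of_dominated_convergence
    (bound := fun s : ℝ => s ^ (α - 1))
  · filter_upwards with ρ
    apply ContinuousOn.aestronglyMeasurable _ measurableSet_Ioi
    intro s hs
    have hs0 : (0:ℝ) < s := lt_trans zero_lt_one hs
    exact ((continuousAt_id.rpow_const (Or.inl hs0.ne')).mul
      (Real.continuous_exp.continuousAt.comp ((continuousAt_id.const_mul ρ).neg))).continuousWithinAt
  · filter_upwards [self_mem_nhdsWithin] with ρ (hρ : ρ ∈ Ioi (0:ℝ))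
    rw [ae_restrict_iff' measurableSet_Ioi]
    filter_upwards with s hs
    have hs1 : (1:ℝ) < s := hs
    have hs0 : (0:ℝ) < s := lt_trans zero_lt_one hs1
    rw [Real.norm_eq_abs, abs_of_nonneg (by positivity)]
    apply mul_le_of_le_one_right (by positivity)
    exact Real.exp_le_one_iff.mpr (neg_nonpos.mpr (mul_nonneg (le_of_lt hρ) hs0.le))
  · exact integrableOn_Ioi_rpow_of_lt (by linarith) zero_lt_one
  · filter_upwards with s
    have h0 : Tendsto (fun ρ : ℝ => ρ) (nhdsWithin 0 (Set.Ioi 0)) (nhds 0) :=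
      tendsto_id.mono_left nhdsWithin_le_nhds
    have h := (Real.continuous_exp.tendsto _).comp ((h0.mul_const s).neg)
    have h2 := (tendsto_const_nhds (x := s ^ (α - 1))).mul h
    simpa using h2

lemma uGamma_eq (α ρ : ℝ) (hρ : 0 < ρ) :
    uGamma α ρ = ρ ^ α * ∫ s in Set.Ioi (1:ℝ), s ^ (α - 1) * Real.exp (-(ρ * s)) := by
  have key := integral_comp_mul_left_Ioi (fun t : ℝ => t ^ (α - 1) * Real.exp (-t)) 1 hρ
  simp only [mul_one, smul_eq_mul] at key
  have lhs : (∫ x in Set.Ioi (1:ℝ), (ρ * x) ^ (α - 1) * Real.exp (-(ρ * x)))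
      = ρ ^ (α - 1) * ∫ s in Set.Ioi (1:ℝ), s ^ (α - 1) * Real.exp (-(ρ * s)) := by
    rw [← integral_const_mul]
    apply setIntegral_congr_fun measurableSet_Ioi
    intro x hx
    have hx0 : (0:ℝ) ≤ x := le_of_lt (lt_trans zero_lt_one hx)
    dsimp only
    rw [Real.mul_rpow hρ.le hx0]
    ring
  have h2 : ρ ^ (α - 1) * ρ = ρ ^ α := by
    rw [← Real.rpow_add_one hρ.ne' (α - 1)]
    ring_nf
  rw [lhs] at key
  rw [uGamma, ← h2,
    show ρ ^ (α - 1) * ρ * (∫ s in Set.Ioi (1:ℝ), s ^ (α - 1) * Real.exp (-(ρ * s)))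
      = ρ * (ρ ^ (α - 1) * ∫ s in Set.Ioi (1:ℝ), s ^ (α - 1) * Real.exp (-(ρ * s))) by ring,
    key, mul_inv_cancel_left₀ hρ.ne']

lemma moment_eq (σ α : ℝ) (hσ : 0 < σ) (k : ℕ) (ρ : ℝ) (hρ : 0 < ρ) :
    (∫ x in Set.Ioi (0:ℝ), x ^ k * ftg α (ρ / σ) ρ x)
      = (∫ x in Set.Ioi (0:ℝ), x ^ k * (1 + x / σ) ^ (α - 1) * Real.exp (-(ρ * (1 + x / σ))))
        / (σ * ∫ s in Set.Ioi (1:ℝ), s ^ (α - 1) * Real.exp (-(ρ * s))) := by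
  have hρα : ρ ^ α ≠ 0 := (Real.rpow_pos_of_pos hρ α).ne'
  have hint : ∀ x ∈ Set.Ioi (0:ℝ), x ^ k * ftg α (ρ / σ) ρ x
      = (ρ ^ α / (σ * uGamma α ρ)) *
        (x ^ k * (1 + x / σ) ^ (α - 1) * Real.exp (-(ρ * (1 + x / σ)))) := by
    intro x hx
    have hx0 : (0:ℝ) < x := hx
    have hc : (0:ℝ) < 1 + x / σ := by positivity
    have h1 : ρ + ρ / σ * x = ρ * (1 + x / σ) := by ring
    have h2 : ρ ^ (α - 1) * ρ = ρ ^ α := by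
      rw [← Real.rpow_add_one hρ.ne' (α - 1)]; ring_nf
    simp only [ftg, h1, Real.mul_rpow hρ.le hc.le]
    rw [← h2]
    ring
  rw [setIntegral_congr_fun measurableSet_Ioi hint, integral_const_mul, uGamma_eq α ρ hρ]
  rw [show σ * (ρ ^ α * ∫ s in Set.Ioi (1:ℝ), s ^ (α - 1) * Real.exp (-(ρ * s)))
      = ρ ^ α * (σ * ∫ s in Set.Ioi (1:ℝ), s ^ (α - 1) * Real.exp (-(ρ * s))) by ring,
    div_mul_cancel_left₀ hρα, inv_mul_eq_div]

theorem ftg_moments_tendsto_pareto (σ α : ℝ) (hσ : 0 < σ) (hα : α < 0)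
    (k : ℕ) (hk : 0 < k) (hkα : (k : ℝ) < -α) :
    MeasureTheory.IntegrableOn (fun x : ℝ => x ^ k * pareto α σ x) (Set.Ioi 0) ∧
    Filter.Tendsto (fun ρ : ℝ => ∫ x in Set.Ioi (0:ℝ), x ^ k * ftg α (ρ / σ) ρ x)
      (nhdsWithin 0 (Set.Ioi 0))
      (nhds (∫ x in Set.Ioi (0:ℝ), x ^ k * pareto α σ x)) := by
  have hfe : (fun x : ℝ => x ^ k * pareto α σ x)
      = fun x : ℝ => (-α * σ⁻¹) * (x ^ k * (1 + x / σ) ^ (α - 1)) := by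
    funext x; simp only [pareto]; ring
  constructor
  · rw [hfe]
    exact (base_integrable σ α hσ hα k hkα).const_mul _
  · have hB : (∫ x in Set.Ioi (0:ℝ), x ^ k * pareto α σ x)
        = (-α * σ⁻¹) * ∫ x in Set.Ioi (0:ℝ), x ^ k * (1 + x / σ) ^ (α - 1) := by
      rw [hfe, integral_const_mul]
    have hJne : σ * (-1 / α) ≠ 0 := by
      have h1 : (0:ℝ) < -1 / α := by
        rw [neg_div]
        have : 1 / α < 0 := one_div_neg.mpr hα
        linarith
      positivity
    have hlim := (I_tendsto σ α hσ hα k hkα).div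
      ((tendsto_const_nhds (x := σ)).mul (J_tendsto α hα)) hJne
    have hA : ∀ B : ℝ, B / (σ * (-1 / α)) = -α * σ⁻¹ * B := by
      intro B
      field_simp
    have heq : (∫ x in Set.Ioi (0:ℝ), x ^ k * (1 + x / σ) ^ (α - 1)) / (σ * (-1 / α))
        = ∫ x in Set.Ioi (0:ℝ), x ^ k * pareto α σ x := by
      rw [hB, hA]
    rw [← heq]
    apply hlim.congr'
    filter_upwards [self_mem_nhdsWithin] with ρ (hρ : ρ ∈ Ioi (0:ℝ))
    exact (moment_eq σ α hσ k ρ hρ).symm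
end

section
/- If X has FTG distribution with parameters α ∈ ℝ, θ > 0, ρ > 0, then Var[X] = (α + (1+ρ-α)μ - μ²)/θ², where μ = e^{-ρ} ρ^α / Γ(α,ρ). -/
open MeasureTheory Real Filter Set

lemma aux_integrableOn (a : ℝ) {r : ℝ} (hr : 0 < r) :
    IntegrableOn (fun t : ℝ => t ^ (a - 1) * Real.exp (-t)) (Set.Ioi r) := by
  refine integrable_of_isBigO_exp_neg one_half_pos ?_ ?_
  · exact (continuousOn_id.rpow_const fun x hx =>
      Or.inl (hr.trans_le hx).ne').mul (continuousOn_id.neg.rexp)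
  · have h := tendsto_rpow_mul_exp_neg_mul_atTop_nhds_zero (a - 1) (1/2) one_half_pos
    have hbo : (fun t : ℝ => t ^ (a - 1) * Real.exp (-(1/2) * t)) =O[atTop]
        (fun _ : ℝ => (1 : ℝ)) := h.isBigO_one ℝ
    have heq : (fun t : ℝ => t ^ (a - 1) * Real.exp (-t)) =
        fun t => (t ^ (a - 1) * Real.exp (-(1/2) * t)) * Real.exp (-(1/2) * t) := by
      funext t
      rw [mul_assoc, ← Real.exp_add]
      ring_nf
    rw [heq]
    simpa using hbo.mul (Asymptotics.isBigO_refl (fun t : ℝ => Real.exp (-(1/2) * t)) atTop)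

lemma uGamma_pos (a : ℝ) {r : ℝ} (hr : 0 < r) : 0 < uGamma a r := by
  rw [uGamma]
  have hnn : 0 ≤ᵐ[volume.restrict (Set.Ioi r)] fun t : ℝ => t ^ (a - 1) * Real.exp (-t) := by
    filter_upwards [ae_restrict_mem measurableSet_Ioi] with x hx
    exact (mul_pos (Real.rpow_pos_of_pos (hr.trans hx) _) (Real.exp_pos _)).le
  rw [setIntegral_pos_iff_support_of_nonneg_ae hnn (aux_integrableOn a hr)]
  have hsub : Set.Ioi (r + 1) ⊆
      (Function.support fun t : ℝ => t ^ (a - 1) * Real.exp (-t)) ∩ Set.Ioi r := by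
    intro x hx
    refine ⟨?_, lt_trans (by linarith) hx.out⟩
    have hx0 : (0:ℝ) < x := by have := hx.out; linarith
    exact (mul_pos (Real.rpow_pos_of_pos hx0 _) (Real.exp_pos _)).ne'
  refine lt_of_lt_of_le ?_ (measure_mono hsub)
  simp [Real.volume_Ioi]

lemma uGamma_rec (a : ℝ) {r : ℝ} (hr : 0 < r) :
    uGamma (a + 1) r = a * uGamma a r + r ^ a * Real.exp (-r) := by
  have hint1 : IntegrableOn (fun t : ℝ => t ^ a * Real.exp (-t)) (Set.Ioi r) := by
    simpa using aux_integrableOn (a + 1) hr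
  have key : ∫ t in Set.Ioi r, (t ^ a * Real.exp (-t) - a * (t ^ (a - 1) * Real.exp (-t)))
      = 0 - (-(r ^ a * Real.exp (-r))) := by
    apply integral_Ioi_of_hasDerivAt_of_tendsto
      (f := fun t : ℝ => -(t ^ a * Real.exp (-t)))
    · apply ContinuousWithinAt.neg
      apply ContinuousWithinAt.mul
      · exact (Real.continuousAt_rpow_const r a (Or.inl hr.ne')).continuousWithinAt
      · exact (Real.continuous_exp.comp continuous_neg).continuousWithinAt
    · intro x hx
      have hx0 : x ≠ 0 := (hr.trans hx.out).ne'
      have h1 : HasDerivAt (fun t : ℝ => t ^ a) (a * x ^ (a - 1)) x :=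
        Real.hasDerivAt_rpow_const (Or.inl hx0)
      have h2 : HasDerivAt (fun t : ℝ => Real.exp (-t)) (-Real.exp (-x)) x := by
        simpa using ((hasDerivAt_id x).neg.exp)
      convert (h1.mul h2).neg using 1
      · rfl
      ring
    · exact hint1.sub ((aux_integrableOn a hr).const_mul a)
    · have h := tendsto_rpow_mul_exp_neg_mul_atTop_nhds_zero a 1 one_pos
      have : (fun t : ℝ => -(t ^ a * Real.exp (-t))) =
          fun t => -(t ^ a * Real.exp (-1 * t)) := by
        funext t; rw [neg_one_mul]
      rw [this, show (0:ℝ) = -0 by ring]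
      exact h.neg
  have hsub : ∫ t in Set.Ioi r, (t ^ a * Real.exp (-t) - a * (t ^ (a - 1) * Real.exp (-t)))
      = (∫ t in Set.Ioi r, t ^ a * Real.exp (-t))
        - a * ∫ t in Set.Ioi r, t ^ (a - 1) * Real.exp (-t) := by
    rw [integral_sub hint1 ((aux_integrableOn a hr).const_mul a), MeasureTheory.integral_const_mul a (fun t : ℝ => t ^ (a - 1) * Real.exp (-t))]
  have hug : uGamma (a + 1) r = ∫ t in Set.Ioi r, t ^ a * Real.exp (-t) := by
    rw [uGamma]; norm_num
  rw [hug, uGamma]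
  rw [hsub] at key
  linarith [key]

lemma integral_Ioi_comp_add (g : ℝ → ℝ) (r : ℝ) :
    ∫ x in Set.Ioi (0:ℝ), g (r + x) = ∫ t in Set.Ioi r, g t := by
  rw [← integral_indicator measurableSet_Ioi, ← integral_indicator measurableSet_Ioi]
  rw [← integral_add_left_eq_self (fun x => Set.indicator (Set.Ioi r) g x) r]
  congr 1
  funext x
  simp only [Set.indicator_apply, Set.mem_Ioi]
  by_cases hx : (0:ℝ) < x
  · rw [if_pos hx, if_pos (by linarith)]
  · rw [if_neg hx, if_neg (by intro h; exact hx (by linarith))]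

theorem ftg_variance (α θ ρ : ℝ) (hθ : 0 < θ) (hρ : 0 < ρ)
    (μ : ℝ) (hμ : μ = Real.exp (-ρ) * ρ ^ α / uGamma α ρ) :
    (∫ x in Set.Ioi (0:ℝ), (x - (α - ρ + μ) / θ) ^ 2 * ftg α θ ρ x) =
      (α + (1 + ρ - α) * μ - μ ^ 2) / θ ^ 2 := by
  have hGpos := uGamma_pos α hρ
  set G := uGamma α ρ with hG
  have hGne : G ≠ 0 := hGpos.ne'
  have hμG : Real.exp (-ρ) * ρ ^ α = μ * G := by
    rw [hμ]; field_simp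
  set c := α + μ with hc
  set h : ℝ → ℝ := fun t => (t - c) ^ 2 * (t ^ (α - 1) * Real.exp (-t)) / (θ * G) with hh
  have step1 : (∫ x in Set.Ioi (0:ℝ), (x - (α - ρ + μ) / θ) ^ 2 * ftg α θ ρ x)
      = ∫ x in Set.Ioi (0:ℝ), h (ρ + θ * x) := by
    refine setIntegral_congr_fun measurableSet_Ioi fun x hx => ?_
    rw [hh, ftg]
    have : x - (α - ρ + μ) / θ = (ρ + θ * x - c) / θ := by
      rw [hc]; field_simp; ring
    rw [this, ← hG]
    field_simp
  have step2 : (∫ x in Set.Ioi (0:ℝ), h (ρ + θ * x)) = θ⁻¹ * ∫ t in Set.Ioi ρ, h t := by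
    have := integral_comp_mul_left_Ioi (fun y => h (ρ + y)) 0 hθ
    simp only [mul_zero, smul_eq_mul] at this
    rw [show (∫ x in Set.Ioi (0:ℝ), h (ρ + θ * x))
        = ∫ x in Set.Ioi (0:ℝ), (fun y => h (ρ + y)) (θ * x) from rfl, this,
      integral_Ioi_comp_add h ρ]
  have hI2 : IntegrableOn (fun t : ℝ => t ^ ((α+1) - 1) * Real.exp (-t)) (Set.Ioi ρ) :=
    aux_integrableOn (α+1) hρ
  have hI3 : IntegrableOn (fun t : ℝ => t ^ ((α+2) - 1) * Real.exp (-t)) (Set.Ioi ρ) :=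
    aux_integrableOn (α+2) hρ
  have hI1 : IntegrableOn (fun t : ℝ => t ^ (α - 1) * Real.exp (-t)) (Set.Ioi ρ) :=
    aux_integrableOn α hρ
  have expand : (∫ t in Set.Ioi ρ, (t - c) ^ 2 * (t ^ (α - 1) * Real.exp (-t)))
      = uGamma (α+2) ρ - 2 * c * uGamma (α+1) ρ + c ^ 2 * G := by
    have congr1 : (∫ t in Set.Ioi ρ, (t - c) ^ 2 * (t ^ (α - 1) * Real.exp (-t)))
        = ∫ t in Set.Ioi ρ, (t ^ ((α+2) - 1) * Real.exp (-t)
            - 2 * c * (t ^ ((α+1) - 1) * Real.exp (-t))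
            + c ^ 2 * (t ^ (α - 1) * Real.exp (-t))) := by
      refine setIntegral_congr_fun measurableSet_Ioi fun t ht => ?_
      have ht0 : (0:ℝ) < t := hρ.trans ht.out
      have e1 : t ^ ((α+1) - 1) = t ^ (α - 1) * t := by
        rw [show α + 1 - 1 = (α - 1) + 1 by ring, Real.rpow_add_one ht0.ne']
      have e2 : t ^ ((α+2) - 1) = t ^ (α - 1) * t * t := by
        rw [show α + 2 - 1 = ((α - 1) + 1) + 1 by ring, Real.rpow_add_one ht0.ne',
          Real.rpow_add_one ht0.ne']
      rw [e1, e2]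
      ring
    have hsub' : Integrable (fun t : ℝ => t ^ ((α+2) - 1) * Real.exp (-t)
        - 2 * c * (t ^ ((α+1) - 1) * Real.exp (-t))) (volume.restrict (Set.Ioi ρ)) :=
      hI3.sub (hI2.const_mul (2*c))
    rw [congr1, integral_add hsub' (hI1.const_mul (c^2))]
    rw [integral_sub hI3 (hI2.const_mul (2*c)),
      MeasureTheory.integral_const_mul (2*c) (fun t : ℝ => t ^ ((α+1) - 1) * Real.exp (-t)),
      MeasureTheory.integral_const_mul (c^2) (fun t : ℝ => t ^ (α - 1) * Real.exp (-t))]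
    rw [uGamma, uGamma, hG, uGamma]
  have hint_h : (∫ t in Set.Ioi ρ, h t)
      = (uGamma (α+2) ρ - 2 * c * uGamma (α+1) ρ + c ^ 2 * G) / (θ * G) := by
    rw [hh]
    simp only
    rw [integral_div, expand]
  have rec1 : uGamma (α+1) ρ = α * G + μ * G := by
    rw [uGamma_rec α hρ, ← hG, ← hμG]; ring
  have rec2 : uGamma (α+2) ρ = (α+1) * uGamma (α+1) ρ + ρ ^ (α+1) * Real.exp (-ρ) := by
    have := uGamma_rec (α+1) hρ
    rw [show α + 2 = α + 1 + 1 by ring]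
    exact this
  have hrpow : ρ ^ (α+1) = ρ ^ α * ρ := Real.rpow_add_one hρ.ne' α
  rw [step1, step2, hint_h, rec2, rec1, hrpow, hc]
  have : ρ ^ α * ρ * Real.exp (-ρ) = ρ * (μ * G) := by
    rw [← hμG]; ring
  rw [this]
  field_simp
  ring
end
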